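/- For all X_1, …, X_h ∈ R, g(μ(X_1, …, X_h)) equals the determinant of the h×h matrix whose i-th row is (f(X_i), X_i^q, X_i^{q^2}, …, X_i^{q^{h−1}}). -/

import Mathlib

open Finset

noncomputable section

/-- The Moore determinant `μ(X₁, …, X_h) = det (Xᵢ^{q^{j-1}})`. -/
def moore (q : ℕ) {h : ℕ} {R : Type*} [CommRing R] (X : Fin h → R) : R :=
  Matrix.det (Matrix.of fun i j : Fin h => X i ^ q ^ (j : ℕ))

/-- `f(X) = πX + u₁X^q + ⋯ + u_{h−1}X^{q^{h−1}} + X^{q^h}`. -/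
def fmap (q h : ℕ) {R : Type*} [CommRing R] (π : R) (u : ℕ → R) (X : R) : R :=
  π * X + (∑ k ∈ Finset.Ico 1 h, u k * X ^ q ^ k) + X ^ q ^ h

/-- `g(T) = πT + (−1)^{h−1}T^q`. -/
def gmap (q h : ℕ) {R : Type*} [CommRing R] (π : R) (T : R) : R :=
  π * T + (-1) ^ (h - 1) * T ^ q

/-- For all `X₁, …, X_h ∈ R`, `g(μ(X₁, …, X_h))` equals the determinant of the `h×h`
matrix whose `i`-th row is `(f(Xᵢ), Xᵢ^q, Xᵢ^{q²}, …, Xᵢ^{q^{h−1}})`. -/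
theorem gmap_moore_eq_det
    (p e q h : ℕ) (hp : p.Prime) (he : 1 ≤ e) (hq : q = p ^ e) (hh : 1 ≤ h)
    (K : Type*) [Field K] [Fintype K] [DecidableEq K] (hK : Fintype.card K = q)
    (R : Type*) [CommRing R] [Algebra K R]
    (π : R) (u : ℕ → R) (X : Fin h → R) :
    gmap q h π (moore q X)
      = Matrix.det (Matrix.of fun i j : Fin h =>
          if (j : ℕ) = 0 then fmap q h π u (X i) else X i ^ q ^ (j : ℕ)) := by
  rcases subsingleton_or_nontrivial R with hR | hR
  · exact Subsingleton.elim _ _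
  -- characteristic of R is p
  obtain ⟨p', hp'⟩ := CharP.exists K
  haveI := hp'
  obtain ⟨n0, hpp', hcard⟩ := FiniteField.card K p'
  have hpe : p = p' := by
    have hd : p ∣ p' ^ (n0 : ℕ) := by
      rw [← hcard, hK, hq]; exact dvd_pow_self p (by omega)
    exact (Nat.prime_dvd_prime_iff_eq hp hpp').mp (hp.dvd_of_dvd_pow hd)
  haveI : CharP K p := hpe ▸ hp'
  haveI : CharP R p := charP_of_injective_algebraMap' K (A := R) p
  haveI : ExpChar R p := .prime hp
  obtain ⟨n, rfl⟩ : ∃ n, h = n + 1 := ⟨h - 1, by omega⟩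
  -- Frobenius
  have hfrob : ∀ x : R, (iterateFrobenius R p e) x = x ^ q := fun x => by
    rw [iterateFrobenius_def, hq]
  set A : Matrix (Fin (n + 1)) (Fin (n + 1)) R :=
    Matrix.of fun i j : Fin (n + 1) => X i ^ q ^ (j : ℕ) with hA
  set F : (Fin (n + 1) → R) →ₗ[R] R :=
    { toFun := fun v => (A.updateCol (0 : Fin (n + 1)) v).det
      map_add' := Matrix.det_updateCol_add A 0
      map_smul' := Matrix.det_updateCol_smul A 0 } with hF
  have hFapp : ∀ v, F v = (A.updateCol (0 : Fin (n + 1)) v).det := fun _ => rfl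
  -- RHS as F
  have hrhs : (Matrix.of fun i j : Fin (n + 1) =>
      if (j : ℕ) = 0 then fmap q (n + 1) π u (X i) else X i ^ q ^ (j : ℕ))
      = A.updateCol 0 (fun i => fmap q (n + 1) π u (X i)) := by
    ext i j
    rw [Matrix.updateCol_apply]
    by_cases hj : j = 0
    · simp [hj]
    · have hjv : (j : ℕ) ≠ 0 := fun hc => hj (Fin.ext (by simpa using hc))
      simp [hj, hjv, hA]
  rw [hrhs, ← hFapp]
  have hsplit : (fun i => fmap q (n + 1) π u (X i))
      = (π • fun i => X i)
        + (∑ k ∈ Finset.Ico 1 (n + 1), u k • fun i : Fin (n + 1) => X i ^ q ^ k)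
        + (fun i => X i ^ q ^ (n + 1)) := by
    funext i
    simp [fmap, Finset.sum_apply]
  rw [hsplit, map_add, map_add, map_smul, map_sum]
  -- first term
  have h1 : F (fun i => X i) = moore q X := by
    rw [hFapp]
    have : (fun i : Fin (n + 1) => X i) = fun i => A i 0 := by
      funext i; simp [hA]
    rw [this, Matrix.updateCol_eq_self]
    rfl
  -- middle terms vanish
  have h2 : ∀ k ∈ Finset.Ico 1 (n + 1),
      F (u k • fun i : Fin (n + 1) => X i ^ q ^ k) = 0 := by
    intro k hk
    rw [map_smul, smul_eq_mul, hFapp]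
    rw [Finset.mem_Ico] at hk
    have hk0 : ((⟨k, hk.2⟩ : Fin (n + 1)) : Fin (n + 1)) ≠ 0 := by
      intro hc
      have := congrArg Fin.val hc
      simp at this
      omega
    rw [Matrix.det_zero_of_column_eq hk0.symm, mul_zero]
    intro i
    simp [Matrix.updateCol_apply, hk0.symm, hA]
  -- last term
  have h3 : F (fun i => X i ^ q ^ (n + 1)) = (-1 : R) ^ n * (moore q X) ^ q := by
    have hmq : (moore q X) ^ q
        = (Matrix.of fun i j : Fin (n + 1) => X i ^ q ^ ((j : ℕ) + 1)).det := by
      have := RingHom.map_det (iterateFrobenius R p e)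
        (Matrix.of fun i j : Fin (n + 1) => X i ^ q ^ (j : ℕ))
      rw [moore, ← hfrob, this]
      congr 1
      ext i j
      simp only [RingHom.mapMatrix_apply, Matrix.map_apply, Matrix.of_apply, hfrob]
      rw [← pow_mul, ← pow_succ]
    have hsub : (Matrix.of fun i j : Fin (n + 1) => X i ^ q ^ ((j : ℕ) + 1))
        = (A.updateCol 0 (fun i => X i ^ q ^ (n + 1))).submatrix id (finRotate (n + 1)) := by
      ext i j
      simp only [Matrix.submatrix_apply, id_eq, finRotate_succ_apply,
        Matrix.updateCol_apply, Matrix.of_apply]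
      by_cases hj : j = Fin.last n
      · subst hj
        simp [Fin.last_add_one]
      · have hv : ((j + 1 : Fin (n + 1)) : ℕ) = (j : ℕ) + 1 := by
          rw [Fin.val_add_one, if_neg hj]
        have hnz : (j + 1 : Fin (n + 1)) ≠ 0 := by
          intro hc
          rw [hc] at hv
          simp at hv
        rw [if_neg hnz, hA]
        simp [hv]
    have key : (moore q X) ^ q
        = ((-1 : R) ^ n) * (A.updateCol 0 (fun i => X i ^ q ^ (n + 1))).det := by
      rw [hmq, hsub, Matrix.det_permute', sign_finRotate]
      push_cast
      ring
    rw [hFapp, key, ← mul_assoc, ← pow_add]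
    rw [Even.neg_one_pow ⟨n, rfl⟩, one_mul]
  rw [h1, Finset.sum_congr rfl h2, Finset.sum_const_zero, h3]
  simp [gmap]
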